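/- Let T be a monad on A, S a monad on B, both with Eilenberg–Moore adjunctions, and (h, χ) : (A,T) → (B,S) a monad opfunctor. Suppose the coequalizer π(h,χ) : F^S ∘ h ∘ U^T → V(h,χ) of the reflexive pair F^S h U^T F^T U^T ⇉ F^S h U^T (with maps induced by ε^T and by χ followed by ε^S) exists and is preserved by whiskering. Then precomposing with F^T, one has (π(h,χ) ▷ F^T) : F^S ∘ h ∘ U^T ∘ F^T → V(h,χ) ∘ F^T equal to the composite F^S ∘ h ∘ T → F^S ∘ S ∘ h = F^S ∘ U^S ∘ F^S ∘ h → F^S ∘ h given by χ followed by ε^S; in particular V(h,χ) ∘ F^T ≅ F^S ∘ h, i.e. V(h,χ) is a lifting of h along the free functors. -/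

import Mathlib

open CategoryTheory CategoryTheory.Limits

universe w w' v v' u u'

/-- Given a monad opfunctor `(h, χ) : (A,T) → (B,S)` and the Linton coequalizer
`π(h,χ) : F^S ∘ h ∘ U^T ⟶ V(h,χ)` of the reflexive pair (assumed to exist and be preserved
by whiskering), precomposing with `F^T` yields the composite
`F^S ∘ h ∘ T → F^S ∘ S ∘ h = F^S ∘ U^S ∘ F^S ∘ h → F^S ∘ h` given by `χ` followed by `ε^S`;
in particular `V(h,χ) ∘ F^T ≅ F^S ∘ h`, i.e. `V(h,χ)` is a lifting of `h` along the free
functors. -/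
theorem stmt_8 {A : Type u} {B : Type u'} [Category.{v} A] [Category.{v'} B]
    (T : CategoryTheory.Monad A) (S : CategoryTheory.Monad B) (h : A ⥤ B)
    (χ : T.toFunctor ⋙ h ⟶ h ⋙ S.toFunctor)
    -- `(h, χ)` is a monad opfunctor
    (hmul : ∀ X : A, h.map (T.μ.app X) ≫ χ.app X =
        χ.app (T.obj X) ≫ S.map (χ.app X) ≫ S.μ.app (h.obj X))
    (hunit : ∀ X : A, h.map (T.η.app X) ≫ χ.app X = S.η.app (h.obj X))
    -- the Linton coequalizer `π(h,χ)` exists ...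
    (V : T.Algebra ⥤ S.Algebra) (π : T.forget ⋙ h ⋙ S.free ⟶ V)
    (hw : ∀ a : T.Algebra,
      S.free.map (h.map a.a) ≫ π.app a =
        (S.free.map (χ.app a.A) ≫ S.adj.counit.app (S.free.obj (h.obj a.A))) ≫ π.app a)
    (hcolim : ∀ a : T.Algebra, Nonempty (IsColimit (Cofork.ofπ (π.app a) (hw a))))
    -- ... and is preserved by (horizontal composition with any 1-cell, in particular by)
    -- any functor out of `B^S`
    (hpres : ∀ {E : Type w} [Category.{w'} E] (K : S.Algebra ⥤ E) (a : T.Algebra),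
      Nonempty (IsColimit (K.mapCocone (Cofork.ofπ (π.app a) (hw a))))) :
    ∃ e : T.free ⋙ V ≅ h ⋙ S.free,
      ∀ X : A, π.app (T.free.obj X) ≫ e.hom.app X =
        S.free.map (χ.app X) ≫ S.adj.counit.app (S.free.obj (h.obj X)) := by
  classical
  -- the candidate comparison map at the free algebra over `X`
  have hcond : ∀ X : A,
      S.free.map (h.map (T.free.obj X).a) ≫
          (S.free.map (χ.app X) ≫ S.adj.counit.app (S.free.obj (h.obj X))) =
        (S.free.map (χ.app (T.free.obj X).A) ≫
            S.adj.counit.app (S.free.obj (h.obj (T.free.obj X).A))) ≫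
          (S.free.map (χ.app X) ≫ S.adj.counit.app (S.free.obj (h.obj X))) := by
    intro X
    ext
    simp only [Monad.adj_counit, Monad.free_obj_a, Monad.free_map_f, Monad.free_obj_A, Monad.Algebra.comp_f,
      Category.assoc, Monad.forget_obj]
    change S.map (h.map (T.μ.app X)) ≫ S.map (χ.app X) ≫ S.μ.app (h.obj X) =
      (S.map (χ.app (T.obj X)) ≫ S.μ.app (h.obj (T.obj X))) ≫ S.map (χ.app X) ≫ S.μ.app (h.obj X)
    rw [← S.map_comp_assoc, hmul]
    have hn := S.μ.naturality (χ.app X)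
    dsimp at hn
    simp only [S.map_comp, Category.assoc, S.assoc, reassoc_of% hn]
  -- it coequalizes the pair, in a split fashion, so is a colimit cofork
  have hsplit : ∀ X : A, IsColimit (Cofork.ofπ
      (S.free.map (χ.app X) ≫ S.adj.counit.app (S.free.obj (h.obj X))) (hcond X)) := by
    intro X
    apply Cofork.IsColimit.mk'
    intro s
    refine ⟨S.free.map (h.map (T.η.app X)) ≫ s.π, ?_, ?_⟩
    · have h1 : (S.free.map (χ.app X) ≫ S.adj.counit.app (S.free.obj (h.obj X))) ≫
          S.free.map (h.map (T.η.app X)) =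
          S.free.map (h.map (T.map (T.η.app X))) ≫
            (S.free.map (χ.app (T.free.obj X).A) ≫
              S.adj.counit.app (S.free.obj (h.obj (T.free.obj X).A))) := by
        ext
        simp only [Monad.adj_counit, Monad.free_obj_a, Monad.free_map_f, Monad.free_obj_A, Monad.Algebra.comp_f,
          Category.assoc, Monad.forget_obj]
        change (S.map (χ.app X) ≫ S.μ.app (h.obj X)) ≫ S.map (h.map (T.η.app X)) =
          S.map (h.map (T.map (T.η.app X))) ≫ S.map (χ.app (T.obj X)) ≫ S.μ.app (h.obj (T.obj X))
        simp only [Category.assoc]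
        have hn := χ.naturality (T.η.app X)
        dsimp at hn
        have hm2 := S.μ.naturality (h.map (T.η.app X))
        dsimp at hm2
        rw [← S.map_comp_assoc, hn, S.map_comp_assoc, hm2]
      have h2 : S.free.map (h.map (T.map (T.η.app X))) ≫
          S.free.map (h.map (T.free.obj X).a) = 𝟙 _ := by
        change S.free.map (h.map (T.map (T.η.app X))) ≫ S.free.map (h.map (T.μ.app X)) = 𝟙 _
        rw [← S.free.map_comp, ← h.map_comp]
        simp
      change (S.free.map (χ.app X) ≫ S.adj.counit.app (S.free.obj (h.obj X))) ≫
        S.free.map (h.map (T.η.app X)) ≫ s.π = s.π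
      have hc : S.free.map (χ.app (T.free.obj X).A) ≫
          S.adj.counit.app (S.free.obj (h.obj (T.free.obj X).A)) ≫ s.π =
          S.free.map (h.map (T.free.obj X).a) ≫ s.π := by
        exact (Category.assoc _ _ _).symm.trans s.condition.symm
      exact ((reassoc_of% h1) s.π).trans ((Category.assoc _ _ _).trans
        ((congrArg (S.free.map (h.map (T.map (T.η.app X))) ≫ ·) ((Category.assoc _ _ _).trans hc)).trans
        (((reassoc_of% h2) s.π).trans (Category.id_comp _))))
    · intro m hm
      have h3 : S.free.map (h.map (T.η.app X)) ≫
          (S.free.map (χ.app X) ≫ S.adj.counit.app (S.free.obj (h.obj X))) = 𝟙 _ := by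
        ext
        simp only [Monad.adj_counit, Monad.free_obj_a, Monad.free_map_f, Monad.free_obj_A, Monad.Algebra.comp_f,
          Category.assoc, Monad.forget_obj]
        change S.map (h.map (T.η.app X)) ≫ S.map (χ.app X) ≫ S.μ.app (h.obj X) = 𝟙 _
        rw [← S.map_comp_assoc, hunit]
        simp
      change (S.free.map (χ.app X) ≫ S.adj.counit.app (S.free.obj (h.obj X))) ≫ m = s.π at hm
      simp only [← hm, Category.assoc]
      rw [reassoc_of% h3]
  have key : ∀ X : A, π.app (T.free.obj X) ≫
      (IsColimit.coconePointUniqueUpToIso (hcolim (T.free.obj X)).some (hsplit X)).hom =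
      S.free.map (χ.app X) ≫ S.adj.counit.app (S.free.obj (h.obj X)) := fun X => by
    exact
      IsColimit.comp_coconePointUniqueUpToIso_hom (hcolim (T.free.obj X)).some (hsplit X)
        WalkingParallelPair.one
  refine ⟨NatIso.ofComponents
    (fun X => IsColimit.coconePointUniqueUpToIso (hcolim (T.free.obj X)).some (hsplit X)) ?_,
    key⟩
  intro X Y f
  apply Cofork.IsColimit.hom_ext (hcolim (T.free.obj X)).some
  dsimp only [Cofork.π_ofπ, Functor.comp_map]
  change π.app (T.free.obj X) ≫ _ = π.app (T.free.obj X) ≫ _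
  have hnat : π.app (T.free.obj X) ≫ V.map (T.free.map f) =
      S.free.map (h.map (T.map f)) ≫ π.app (T.free.obj Y) := by
    exact (π.naturality (T.free.map f)).symm
  refine ((Category.assoc _ _ _).symm.trans ((congrArg (· ≫ _) hnat).trans (Category.assoc _ _ _))).trans ?_
  refine (congrArg (S.free.map (h.map (T.map f)) ≫ ·) (key Y)).trans ?_
  refine Eq.trans ?_ ((Category.assoc _ _ _).symm.trans (congrArg (· ≫ S.free.map (h.map f)) (key X))).symm
  ext
  simp only [Monad.adj_counit, Monad.free_obj_a, Monad.free_map_f, Monad.free_obj_A, Monad.Algebra.comp_f,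
    Category.assoc, Monad.forget_obj]
  change S.map (h.map (T.map f)) ≫ (S.map (χ.app Y) ≫ S.μ.app (h.obj Y)) =
    (S.map (χ.app X) ≫ S.μ.app (h.obj X)) ≫ S.map (h.map f)
  simp only [Category.assoc]
  have hn := χ.naturality f
  dsimp at hn
  have hm2 := S.μ.naturality (h.map f)
  dsimp at hm2
  rw [← S.map_comp_assoc, hn, S.map_comp_assoc, hm2]
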